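/- (Nair's bound, recovered as a special case) For every integer $n \ge 7$, we have $\mathrm{lcm}(1, 2, \ldots, n) \ge 2^n$. -/

import Mathlib

open Finset Nat

lemma nair_sum (m : ℕ) : ∀ k : ℕ,
    ∑ j ∈ range (m + 1), (-1 : ℚ) ^ j * (m.choose j) / (k + j + 1)
      = 1 / ((m + k + 1) * ((m + k).choose k)) := by
  induction m with
  | zero =>
      intro k
      simp
  | succ m ih =>
      intro k
      have ihk := ih k
      have ihk1 := ih (k + 1)
      push_cast at ihk1
      have key : ∑ j ∈ range (m + 2), (-1 : ℚ) ^ j * ((m+1).choose j) / (k + j + 1)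
          = (∑ j ∈ range (m + 1), (-1 : ℚ) ^ j * (m.choose j) / (k + j + 1))
            - ∑ j ∈ range (m + 1), (-1 : ℚ) ^ j * (m.choose j) / ((k:ℚ) + 1 + j + 1) := by
        rw [Finset.sum_range_succ' (fun j => (-1 : ℚ) ^ j * ((m+1).choose j) / (k + j + 1)) (m+1)]
        have step : ∀ j ∈ range (m+1),
            (-1 : ℚ) ^ (j+1) * ((m+1).choose (j+1)) / (k + (j+1 : ℕ) + 1)
              = (-1 : ℚ) ^ (j+1) * (m.choose (j+1)) / (k + (j+1 : ℕ) + 1)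
                - (-1 : ℚ) ^ j * (m.choose j) / ((k:ℚ) + 1 + j + 1) := by
          intro j _
          rw [Nat.choose_succ_succ' m j]
          have hd : ((k : ℚ) + (j + 1 : ℕ) + 1) = (k : ℚ) + 1 + j + 1 := by push_cast; ring
          rw [hd]
          push_cast
          have hne : ((k : ℚ) + 1 + j + 1) ≠ 0 := by positivity
          field_simp
          ring
        rw [Finset.sum_congr rfl step, Finset.sum_sub_distrib]
        have h2 : ∑ j ∈ range (m+1), (-1 : ℚ) ^ (j+1) * (m.choose (j+1)) / (k + (j+1 : ℕ) + 1)
            = (∑ j ∈ range (m+2), (-1 : ℚ) ^ j * (m.choose j) / (k + j + 1))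
              - (-1 : ℚ) ^ 0 * (m.choose 0) / (k + (0:ℕ) + 1) := by
          rw [Finset.sum_range_succ' (fun j => (-1 : ℚ) ^ j * (m.choose j) / (k + j + 1)) (m+1)]
          ring
        rw [h2, Finset.sum_range_succ]
        simp [Nat.choose_succ_self]
        ring
      rw [key, ihk, ihk1]
      rw [show m + (k + 1) = m + k + 1 from by omega,
          show m + 1 + k = m + k + 1 from by omega,
          Nat.cast_choose ℚ (by omega : k ≤ m + k),
          Nat.cast_choose ℚ (by omega : k + 1 ≤ m + k + 1),
          Nat.cast_choose ℚ (by omega : k ≤ m + k + 1),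
          show m + k - k = m from by omega,
          show m + k + 1 - (k + 1) = m from by omega,
          show m + k + 1 - k = m + 1 from by omega,
          Nat.factorial_succ (m + k), Nat.factorial_succ k, Nat.factorial_succ m]
      have hk : ((k !) : ℚ) ≠ 0 := by positivity
      have hm : ((m !) : ℚ) ≠ 0 := by positivity
      have h1 : (((m + k) !) : ℚ) ≠ 0 := by positivity
      have h2 : ((m : ℚ) + k + 1) ≠ 0 := by positivity
      have h3 : ((m : ℚ) + (k + 1) + 1) ≠ 0 := by positivity
      have h4 : ((k : ℚ) + 1) ≠ 0 := by positivity
      have h5 : ((m : ℚ) + 1) ≠ 0 := by positivity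
      push_cast
      field_simp
      ring

lemma nair_dvd (m k : ℕ) :
    (m + k + 1) * ((m + k).choose k) ∣ (Finset.Icc 1 (m + k + 1)).lcm id := by
  set L := (Finset.Icc 1 (m + k + 1)).lcm id with hL
  have hdvd : ∀ j ∈ range (m + 1), (k + j + 1) ∣ L := by
    intro j hj
    simp only [Finset.mem_range] at hj
    have hmem : k + j + 1 ∈ Finset.Icc 1 (m + k + 1) := Finset.mem_Icc.mpr ⟨by omega, by omega⟩
    simpa using Finset.dvd_lcm (f := id) hmem
  set S : ℤ := ∑ j ∈ range (m + 1), (-1 : ℤ) ^ j * (m.choose j) * ((L / (k + j + 1) : ℕ) : ℤ)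
    with hS
  have hC : (((m + k + 1) * ((m + k).choose k) : ℕ) : ℚ) ≠ 0 := by
    have := Nat.choose_pos (show k ≤ m + k by omega)
    positivity
  have hQ : ((L : ℤ) : ℚ) = (((m + k + 1) * ((m + k).choose k) : ℕ) : ℚ) * (S : ℚ) := by
    have h1 : (S : ℚ) = ∑ j ∈ range (m + 1),
        (-1 : ℚ) ^ j * (m.choose j) * ((L : ℚ) / (k + j + 1)) := by
      rw [hS, Int.cast_sum]
      refine Finset.sum_congr rfl fun j hj => ?_
      have hc : ((L / (k + j + 1) : ℕ) : ℚ) = (L : ℚ) / ((k : ℚ) + j + 1) := by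
        rw [Nat.cast_div (hdvd j hj) (by positivity)]
        push_cast
        ring
      simp only [Int.cast_mul, Int.cast_pow, Int.cast_neg, Int.cast_one, Int.cast_natCast, hc]
    rw [h1]
    have h2 : ∑ j ∈ range (m + 1), (-1 : ℚ) ^ j * (m.choose j) * ((L : ℚ) / (k + j + 1))
        = (L : ℚ) * ∑ j ∈ range (m + 1), (-1 : ℚ) ^ j * (m.choose j) / (k + j + 1) := by
      rw [Finset.mul_sum]
      exact Finset.sum_congr rfl fun j hj => by ring
    rw [h2, nair_sum m k]
    push_cast
    push_cast at hC
    field_simp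
    exact (mul_div_cancel_right₀ _ (by exact_mod_cast (Nat.choose_pos (show k ≤ m + k by omega)).ne')).symm
  have hZ : (L : ℤ) = ((m + k + 1) * ((m + k).choose k) : ℕ) * S := by exact_mod_cast hQ
  have h3 : ((((m + k + 1) * ((m + k).choose k) : ℕ)) : ℤ) ∣ (L : ℤ) := ⟨S, hZ⟩
  exact_mod_cast h3

lemma lcm_Icc_pos (n : ℕ) : 0 < (Finset.Icc 1 n).lcm id := by
  rcases Nat.eq_zero_or_pos ((Finset.Icc 1 n).lcm id) with h | h
  · rw [Finset.lcm_eq_zero_iff] at h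
    obtain ⟨x, hx, hx0⟩ := h
    simp only [Finset.coe_Icc, Set.mem_Icc, Finset.mem_Icc] at hx
    simp only [id] at hx0
    omega
  · exact h

lemma lcm_Icc_dvd_lcm_Icc {a b : ℕ} (h : a ≤ b) :
    (Finset.Icc 1 a).lcm id ∣ (Finset.Icc 1 b).lcm id := by
  apply Finset.lcm_dvd
  intro x hx
  exact Finset.dvd_lcm (Finset.Icc_subset_Icc_right h hx)

lemma nair_helper (m : ℕ) (hm : 4 ≤ m) :
    2 ^ (2 * m + 2) ≤ (Finset.Icc 1 (2 * m + 1)).lcm id := by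
  obtain ⟨s, rfl⟩ : ∃ s, m = s + 1 := ⟨m - 1, by omega⟩
  -- divisibility of (2m+1) * C(2m, m)
  have hA : (2 * (s+1) + 1) * ((2 * (s+1)).choose (s+1)) ∣ (Finset.Icc 1 (2 * (s+1) + 1)).lcm id := by
    have := nair_dvd (s+1) (s+1)
    have e : (s+1) + (s+1) = 2 * (s+1) := by ring
    rwa [e] at this
  -- divisibility of m * C(2m, m) via 2m * C(2m-1, m-1)
  have hB : (s + 1) * ((2 * (s+1)).choose (s+1)) ∣ (Finset.Icc 1 (2 * (s+1) + 1)).lcm id := by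
    have h1 := nair_dvd (s+1) s
    have e : (s+1) + s + 1 = 2 * (s + 1) := by ring
    rw [e] at h1
    have h2 : (s + 1) * ((2 * (s+1)).choose (s+1)) = 2 * (s+1) * (((s+1) + s).choose s) := by
      have := Nat.add_one_mul_choose_eq (2 * s + 1) s
      have e2 : (s+1) + s = 2 * s + 1 := by ring
      have e3 : 2 * (s + 1) = (2 * s + 1) + 1 := by ring
      have e4 : 2 * (s + 1) = s + 1 + (s + 1) := by ring
      rw [e2, e3]
      calc (s + 1) * ((2 * s + 1 + 1).choose (s + 1))
          = (2 * s + 1 + 1).choose (s + 1) * (s + 1) := by ring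
        _ = (2 * s + 1).succ * (2 * s + 1).choose s := (Nat.add_one_mul_choose_eq (2*s+1) s).symm
        _ = (2 * s + 1 + 1) * (2 * s + 1).choose s := rfl
    rw [h2]
    exact dvd_trans h1 (lcm_Icc_dvd_lcm_Icc (by omega))
  -- combine via coprimality
  have hcop : Nat.Coprime (s + 1) (2 * (s + 1) + 1) := by
    have : Nat.Coprime (s+1) 1 := Nat.coprime_one_right _
    simpa [mul_comm] using Nat.Coprime.add_mul_left_right this 2
  have hcomb : (s + 1) * (2 * (s+1) + 1) * ((2 * (s+1)).choose (s+1))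
      ∣ (Finset.Icc 1 (2 * (s+1) + 1)).lcm id := by
    have h3 := Nat.lcm_dvd hB hA
    rw [Nat.lcm_mul_right] at h3
    have h4 : Nat.lcm (s + 1) (2 * (s + 1) + 1) = (s + 1) * (2 * (s + 1) + 1) := hcop.lcm_eq_mul
    rwa [h4] at h3
  have hle := Nat.le_of_dvd (lcm_Icc_pos _) hcomb
  have hbin : 4 ^ (s + 1) < (s + 1) * Nat.centralBinom (s + 1) :=
    Nat.four_pow_lt_mul_centralBinom (s + 1) hm
  have hcb : Nat.centralBinom (s + 1) = (2 * (s + 1)).choose (s + 1) := rfl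
  calc 2 ^ (2 * (s+1) + 2) = 4 * 4 ^ (s + 1) := by rw [show 2 * (s+1) + 2 = 2 * (s + 2) from by ring, pow_mul]; ring
    _ ≤ (2 * (s+1) + 1) * ((s + 1) * Nat.centralBinom (s + 1)) := by
        have h5 : 4 ≤ 2 * (s+1) + 1 := by omega
        exact Nat.mul_le_mul h5 hbin.le
    _ = (s + 1) * (2 * (s+1) + 1) * ((2 * (s+1)).choose (s+1)) := by rw [hcb]; ring
    _ ≤ _ := hle

/-- Nair's bound: for every integer `n ≥ 7`, `lcm(1, 2, …, n) ≥ 2^n`. -/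
theorem lcm_range_ge_two_pow (n : ℕ) (hn : 7 ≤ n) :
    2 ^ n ≤ (Finset.Icc 1 n).lcm id := by
  by_cases hsmall : n < 9
  · interval_cases n <;> decide
  · push_neg at hsmall
    rcases Nat.even_or_odd n with he | ho
    · obtain ⟨m, hm⟩ := he
      obtain ⟨t, ht⟩ : ∃ t, m = t + 5 := ⟨m - 5, by omega⟩
      have h := nair_helper (t + 4) (by omega)
      have hdvd := lcm_Icc_dvd_lcm_Icc (show 2 * (t + 4) + 1 ≤ n from by omega)
      have := Nat.le_of_dvd (lcm_Icc_pos n) hdvd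
      calc 2 ^ n = 2 ^ (2 * (t + 4) + 2) := by rw [show n = 2 * (t+4) + 2 from by omega]
        _ ≤ (Finset.Icc 1 (2 * (t + 4) + 1)).lcm id := h
        _ ≤ _ := this
    · obtain ⟨m, hm⟩ := ho
      have h := nair_helper m (by omega)
      calc 2 ^ n ≤ 2 ^ (2 * m + 2) := Nat.pow_le_pow_right (by norm_num) (by omega)
        _ ≤ (Finset.Icc 1 (2 * m + 1)).lcm id := h
        _ = (Finset.Icc 1 n).lcm id := by rw [hm]
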